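/- If μ is a fuzzy h-quasi-ideal of a Γ-hemiring S (with left and right unities), then μ⁺′ is a fuzzy h-quasi-ideal of the left operator hemiring L. -/

import Mathlib

open scoped Classical

/-- A `Γ`-hemiring structure on additive commutative monoids `S` and `Γ`. -/
structure GammaHemiring (S : Type) (Γ : Type) [AddCommMonoid S] [AddCommMonoid Γ] : Type where
  tri : S → Γ → S → S
  add_left : ∀ a b α c, tri (a + b) α c = tri a α c + tri b α c
  add_mid : ∀ a α β b, tri a (α + β) b = tri a α b + tri a β b
  add_right : ∀ a α b c, tri a α (b + c) = tri a α b + tri a α c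
  tri_assoc : ∀ a α b β c, tri a α (tri b β c) = tri (tri a α b) β c
  zero_left : ∀ α a, tri 0 α a = 0
  zero_right : ∀ a α, tri a α 0 = 0
  zero_mid : ∀ a b, tri a 0 b = 0

namespace GammaHemiring

variable {S Γ : Type} [AddCommMonoid S] [AddCommMonoid Γ] (H : GammaHemiring S Γ)

/-- Action of a formal sum `Σ (xᵢ, αᵢ)` on an element of `S`. -/
def lAct (u : Multiset (S × Γ)) (a : S) : S := (u.map fun p => H.tri p.1 p.2 a).sum

/-- The congruence `ρ` on the free additive commutative semigroup on `S × Γ`. -/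
def lSetoid : Setoid (Multiset (S × Γ)) where
  r u v := ∀ a, H.lAct u a = H.lAct v a
  iseqv := ⟨fun _ _ => rfl, fun h a => (h a).symm, fun h1 h2 a => (h1 a).trans (h2 a)⟩

/-- The left operator hemiring `L` of a `Γ`-hemiring `S`. -/
def LOp := Quotient H.lSetoid

/-- Multiplication of formal sums: `(Σ[xᵢ,αᵢ])(Σ[yⱼ,βⱼ]) = Σ[xᵢαᵢyⱼ, βⱼ]`. -/
def lMul (u v : Multiset (S × Γ)) : Multiset (S × Γ) :=
  u.bind fun p => v.map fun q => (H.tri p.1 p.2 q.1, q.2)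

lemma lAct_add (u v : Multiset (S × Γ)) (a : S) :
    H.lAct (u + v) a = H.lAct u a + H.lAct v a := by
  simp [lAct]

lemma tri_sum (x : S) (α : Γ) (m : Multiset S) :
    H.tri x α m.sum = (m.map (H.tri x α)).sum := by
  induction m using Multiset.induction_on with
  | empty => simp [H.zero_right]
  | cons b m ih => simp [H.add_right, ih]

lemma lAct_arg_add (u : Multiset (S × Γ)) (b c : S) :
    H.lAct u (b + c) = H.lAct u b + H.lAct u c := by
  simp only [lAct, H.add_right]
  rw [← Multiset.sum_map_add]

lemma lAct_arg_zero (u : Multiset (S × Γ)) : H.lAct u 0 = 0 := by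
  simp [lAct, H.zero_right]

lemma lAct_zero (a : S) : H.lAct 0 a = 0 := by simp [lAct]

lemma lAct_mul (u v : Multiset (S × Γ)) (a : S) :
    H.lAct (H.lMul u v) a = H.lAct u (H.lAct v a) := by
  unfold lAct lMul
  rw [Multiset.map_bind, Multiset.sum_bind]
  congr 1
  refine Multiset.map_congr rfl ?_
  intro p _
  rw [tri_sum, Multiset.map_map, Multiset.map_map]
  congr 1
  refine Multiset.map_congr rfl ?_
  intro q _
  simp [Function.comp, H.tri_assoc]

noncomputable instance : Add H.LOp :=
  ⟨Quotient.map₂ (· + ·) (fun {u u'} hu {v v'} hv a => by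
    rw [lAct_add, lAct_add, hu a, hv a])⟩

noncomputable instance : Zero H.LOp := ⟨Quotient.mk H.lSetoid 0⟩

noncomputable instance : Mul H.LOp :=
  ⟨Quotient.map₂ H.lMul (fun {u u'} hu {v v'} hv a => by
    rw [lAct_mul, lAct_mul, hv a, hu (H.lAct v' a)])⟩

/-- The left operator hemiring structure. -/
noncomputable instance : NonUnitalSemiring H.LOp where
  add := (· + ·)
  zero := 0
  mul := (· * ·)
  nsmul := nsmulRec
  nsmul_zero := fun _ => rfl
  nsmul_succ := fun _ _ => rfl
  add_assoc a b c := Quotient.inductionOn₃ a b c fun u v w =>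
    congrArg (Quotient.mk _) (add_assoc u v w)
  zero_add a := Quotient.inductionOn a fun u => congrArg (Quotient.mk _) (zero_add u)
  add_zero a := Quotient.inductionOn a fun u => congrArg (Quotient.mk _) (add_zero u)
  add_comm a b := Quotient.inductionOn₂ a b fun u v => congrArg (Quotient.mk _) (add_comm u v)
  left_distrib a b c := Quotient.inductionOn₃ a b c fun u v w => Quotient.sound fun s => by
    simp [lAct_mul, lAct_add, lAct_arg_add]
  right_distrib a b c := Quotient.inductionOn₃ a b c fun u v w => Quotient.sound fun s => by
    simp [lAct_mul, lAct_add]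
  zero_mul a := Quotient.inductionOn a fun u => Quotient.sound fun s => by
    simp [lAct_mul, lAct_zero]
  mul_zero a := Quotient.inductionOn a fun u => Quotient.sound fun s => by
    simp [lAct_mul, lAct_zero, lAct_arg_zero]
  mul_assoc a b c := Quotient.inductionOn₃ a b c fun u v w => Quotient.sound fun s => by
    simp [lAct_mul]

/-- The class of a formal sum in `L`. -/
def lMk (u : Multiset (S × Γ)) : H.LOp := Quotient.mk H.lSetoid u

lemma mk_add (u v : Multiset (S × Γ)) : H.lMk u + H.lMk v = H.lMk (u + v) := rfl

lemma mk_mul (u v : Multiset (S × Γ)) : H.lMk u * H.lMk v = H.lMk (H.lMul u v) := rfl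

/-- Action of an element of `L` on `S`. -/
def lActQ : H.LOp → S → S := Quotient.lift H.lAct (fun _ _ h => funext h)

end GammaHemiring
instance : Fact ((0:ℝ) ≤ 1) := ⟨zero_le_one⟩

/-- Characteristic function of a subset, valued in the unit interval. -/
noncomputable def fuzzyChar {X : Type} (A : Set X) (x : X) : unitInterval :=
  if x ∈ A then 1 else 0

/-- A fuzzy h-ideal of a hemiring. -/
def IsFuzzyHIdeal {T : Type} [NonUnitalSemiring T] (μ : T → unitInterval) : Prop :=
  (∀ x y, μ x ⊓ μ y ≤ μ (x + y)) ∧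
  (∀ x y, μ x ⊔ μ y ≤ μ (x * y)) ∧
  (∀ x a b z, x + a + z = b + z → μ a ⊓ μ b ≤ μ x)

namespace GammaHemiring

variable {S Γ : Type} [AddCommMonoid S] [AddCommMonoid Γ] (H : GammaHemiring S Γ)

/-- A fuzzy h-ideal of a `Γ`-hemiring. -/
def IsGFuzzyHIdeal (μ : S → unitInterval) : Prop :=
  (∀ x y, μ x ⊓ μ y ≤ μ (x + y)) ∧
  (∀ x γ y, μ x ⊔ μ y ≤ μ (H.tri x γ y)) ∧
  (∀ x a b z, x + a + z = b + z → μ a ⊓ μ b ≤ μ x)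

/-- For a fuzzy subset `μ` of `L`, the fuzzy subset `μ⁺` of `S`, `μ⁺(x) = inf_γ μ([x,γ])`. -/
noncomputable def plusMap (μ : H.LOp → unitInterval) (x : S) : unitInterval :=
  ⨅ γ : Γ, μ (H.lMk {(x, γ)})

/-- For a fuzzy subset `σ` of `S`, the fuzzy subset `σ⁺′` of `L`,
`σ⁺′(Σᵢ[xᵢ,αᵢ]) = inf_s σ(Σᵢ xᵢαᵢs)`. -/
noncomputable def plusPrime (σ : S → unitInterval) : H.LOp → unitInterval :=
  Quotient.lift (fun u => ⨅ s : S, σ (H.lAct u s))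
    (fun u v h => iInf_congr fun s => by rw [h s])

/-- A left unity of `S`: an element `Σᵢ[eᵢ,δᵢ]` of `L` acting as the identity. -/
def IsLeftUnity (E : Multiset (S × Γ)) : Prop := ∀ a : S, H.lAct E a = a

/-- A right unity of `S`: a formal sum `Σⱼ[γⱼ,fⱼ]` with `Σⱼ a γⱼ fⱼ = a` for all `a`. -/
def IsRightUnity (E : Multiset (Γ × S)) : Prop :=
  ∀ a : S, ((E.map fun p => H.tri a p.1 p.2).sum) = a

end GammaHemiring
/-- An expression `x + Σᵢ aᵢγᵢbᵢ + z = Σᵢ cᵢδᵢdᵢ + z` in a `Γ`-hemiring. -/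
structure GammaHemiring.GExpr {S Γ : Type} [AddCommMonoid S] [AddCommMonoid Γ]
    (H : GammaHemiring S Γ) (x : S) : Type where
  n : ℕ
  a : Fin (n + 1) → S
  g : Fin (n + 1) → Γ
  b : Fin (n + 1) → S
  c : Fin (n + 1) → S
  e : Fin (n + 1) → Γ
  d : Fin (n + 1) → S
  z : S
  eq : x + (∑ i, H.tri (a i) (g i) (b i)) + z = (∑ i, H.tri (c i) (e i) (d i)) + z

/-- The generalized h-product of fuzzy subsets of a `Γ`-hemiring. -/
noncomputable def GammaHemiring.hProdG {S Γ : Type} [AddCommMonoid S] [AddCommMonoid Γ]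
    (H : GammaHemiring S Γ) (μ ν : S → unitInterval) (x : S) : unitInterval :=
  ⨆ e : H.GExpr x, ⨅ i, (μ (e.a i) ⊓ μ (e.c i)) ⊓ (ν (e.b i) ⊓ ν (e.d i))

/-- An expression `x + Σᵢ aᵢbᵢ + z = Σᵢ cᵢdᵢ + z` in a hemiring. -/
structure HExpr (T : Type) [NonUnitalSemiring T] (x : T) : Type where
  n : ℕ
  a : Fin (n + 1) → T
  b : Fin (n + 1) → T
  c : Fin (n + 1) → T
  d : Fin (n + 1) → T
  z : T
  eq : x + (∑ i, a i * b i) + z = (∑ i, c i * d i) + z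

/-- The generalized h-product of fuzzy subsets of a hemiring. -/
noncomputable def hProdH {T : Type} [NonUnitalSemiring T] (μ ν : T → unitInterval)
    (x : T) : unitInterval :=
  ⨆ e : HExpr T x, ⨅ i, (μ (e.a i) ⊓ μ (e.c i)) ⊓ (ν (e.b i) ⊓ ν (e.d i))
/-- A fuzzy h-quasi-ideal of a `Γ`-hemiring, where `χ_S` is the constant function `1`. -/
def GammaHemiring.IsGFuzzyHQuasiIdeal {S Γ : Type} [AddCommMonoid S] [AddCommMonoid Γ]
    (H : GammaHemiring S Γ) (μ : S → unitInterval) : Prop :=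
  (∀ x y, μ x ⊓ μ y ≤ μ (x + y)) ∧
  (∀ x, H.hProdG μ (fun _ => 1) x ⊓ H.hProdG (fun _ => 1) μ x ≤ μ x) ∧
  (∀ x a b z, x + a + z = b + z → μ a ⊓ μ b ≤ μ x)

/-- A fuzzy h-quasi-ideal of a hemiring. -/
def IsFuzzyHQuasiIdeal {T : Type} [NonUnitalSemiring T] (μ : T → unitInterval) : Prop :=
  (∀ x y, μ x ⊓ μ y ≤ μ (x + y)) ∧
  (∀ x, hProdH μ (fun _ => 1) x ⊓ hProdH (fun _ => 1) μ x ≤ μ x) ∧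
  (∀ x a b z, x + a + z = b + z → μ a ⊓ μ b ≤ μ x)


namespace PlusPrimeAux

open GammaHemiring

variable {S Γ : Type} [AddCommMonoid S] [AddCommMonoid Γ] (H : GammaHemiring S Γ)

lemma le_one (x : unitInterval) : x ≤ 1 := x.2.2

/-- Evaluation of a triple. -/
def tf (p : S × Γ × S) : S := H.tri p.1 p.2.1 p.2.2

lemma sum_map_list (f : S × Γ × S → S) (l : List (S × Γ × S)) :
    (l.map f).sum = ∑ i : Fin l.length, f (l.get i) := by
  conv_lhs => rw [← List.ofFn_get l]
  rw [List.map_ofFn, Fin.sum_ofFn]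
  rfl

lemma sum_toList {α : Type} (m : Multiset α) (f : α → S) :
    (m.toList.map f).sum = (m.map f).sum := by
  rw [← Multiset.coe_toList m, Multiset.map_coe, Multiset.sum_coe, Multiset.coe_toList]

lemma hProdG_le_of_list (μ ν : S → unitInterval) (w z : S) (l r : List (S × Γ × S))
    (hlen : l.length = r.length) (hpos : 0 < l.length)
    (heq : w + (l.map (tf H)).sum + z = (r.map (tf H)).sum + z)
    (β : unitInterval)
    (hl : ∀ p ∈ l, β ≤ μ p.1 ⊓ ν p.2.2)
    (hr : ∀ p ∈ r, β ≤ μ p.1 ⊓ ν p.2.2) :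
    β ≤ H.hProdG μ ν w := by
  obtain ⟨n, hn⟩ : ∃ n, l.length = n + 1 :=
    ⟨l.length - 1, (Nat.succ_pred_eq_of_pos hpos).symm⟩
  have hrn : r.length = n + 1 := hlen ▸ hn
  have suml : (l.map (tf H)).sum = ∑ i : Fin (n+1), tf H (l.get (Fin.cast hn.symm i)) := by
    rw [sum_map_list]
    exact (Fintype.sum_equiv (finCongr hn.symm) _ _ (fun i => rfl)).symm
  have sumr : (r.map (tf H)).sum = ∑ i : Fin (n+1), tf H (r.get (Fin.cast hrn.symm i)) := by
    rw [sum_map_list]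
    exact (Fintype.sum_equiv (finCongr hrn.symm) _ _ (fun i => rfl)).symm
  have heq' : w + (∑ i : Fin (n+1), tf H (l.get (Fin.cast hn.symm i))) + z
      = (∑ i : Fin (n+1), tf H (r.get (Fin.cast hrn.symm i))) + z := by
    rw [← suml, ← sumr]; exact heq
  refine le_trans ?_ (le_iSup _ (⟨n,
    fun i => (l.get (Fin.cast hn.symm i)).1,
    fun i => (l.get (Fin.cast hn.symm i)).2.1,
    fun i => (l.get (Fin.cast hn.symm i)).2.2,
    fun i => (r.get (Fin.cast hrn.symm i)).1,
    fun i => (r.get (Fin.cast hrn.symm i)).2.1,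
    fun i => (r.get (Fin.cast hrn.symm i)).2.2,
    z, heq'⟩ : H.GExpr w))
  refine le_iInf fun i => ?_
  have h1 := hl (l.get (Fin.cast hn.symm i))
    (List.get_mem l (Fin.cast hn.symm i))
  have h2 := hr (r.get (Fin.cast hrn.symm i))
    (List.get_mem r (Fin.cast hrn.symm i))
  exact le_inf (le_inf (h1.trans inf_le_left) (h2.trans inf_le_left))
    (le_inf (h1.trans inf_le_right) (h2.trans inf_le_right))

lemma lActQ_mk (u : Multiset (S × Γ)) (s : S) :
    H.lActQ (H.lMk u) s = H.lAct u s := rfl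

lemma lActQ_add (p q : H.LOp) (s : S) :
    H.lActQ (p + q) s = H.lActQ p s + H.lActQ q s :=
  Quotient.inductionOn₂ p q fun u v => H.lAct_add u v s

lemma lActQ_mul (p q : H.LOp) (s : S) :
    H.lActQ (p * q) s = H.lActQ p (H.lActQ q s) :=
  Quotient.inductionOn₂ p q fun u v => H.lAct_mul u v s

/-- Action at `s` as an additive monoid hom. -/
noncomputable def actHom (s : S) : H.LOp →+ S where
  toFun p := H.lActQ p s
  map_zero' := H.lAct_zero s
  map_add' p q := lActQ_add H p q s

lemma plusPrime_le (μ : S → unitInterval) (p : H.LOp) (t : S) :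
    H.plusPrime μ p ≤ μ (H.lActQ p t) :=
  Quotient.inductionOn p fun _ => iInf_le _ t

lemma lActQ_out (p : H.LOp) (t : S) : H.lAct (Quotient.out p) t = H.lActQ p t := by
  conv_rhs => rw [← Quotient.out_eq p]
  rfl

lemma mu_zero (μ : S → unitInterval) (hμ : H.IsGFuzzyHQuasiIdeal μ) (a : S) : μ a ≤ μ 0 := by
  have := hμ.2.2 0 a a 0 (by rw [zero_add])
  simpa using this

lemma heqS (u : Multiset (S × Γ)) (s : S) {n : ℕ} (a b c d : Fin (n+1) → H.LOp) (z : H.LOp)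
    (heq : H.lMk u + (∑ i, a i * b i) + z = (∑ i, c i * d i) + z) :
    H.lAct u s + (∑ i, H.lActQ (a i) (H.lActQ (b i) s)) + H.lActQ z s
      = (∑ i, H.lActQ (c i) (H.lActQ (d i) s)) + H.lActQ z s := by
  have h := congrArg (fun p => actHom H s p) heq
  rw [map_add, map_add, map_add, map_sum, map_sum] at h
  have hact : ∀ p : H.LOp, actHom H s p = H.lActQ p s := fun _ => rfl
  simp only [hact, lActQ_mul, lActQ_mk] at h
  exact h

lemma claimA (E' : Multiset (Γ × S)) (hE' : H.IsRightUnity E')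
    (μ : S → unitInterval) (u : Multiset (S × Γ)) (s : S) :
    hProdH (H.plusPrime μ) (fun _ => 1) (Quotient.mk H.lSetoid u)
      ≤ H.hProdG μ (fun _ => 1) (H.lAct u s) := by
  refine iSup_le fun e => ?_
  set ν := H.plusPrime μ
  set A : Fin (e.n + 1) → S := fun i => H.lActQ (e.a i) (H.lActQ (e.b i) s) with hA
  set C : Fin (e.n + 1) → S := fun i => H.lActQ (e.c i) (H.lActQ (e.d i) s) with hC
  have key := heqS H u s e.a e.b e.c e.d e.z e.eq
  set P : List (Γ × S) := ((0 : Γ), (0 : S)) :: E'.toList with hP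
  have unity : ∀ a : S, (P.map fun q => H.tri a q.1 q.2).sum = a := by
    intro a
    rw [hP, List.map_cons, List.sum_cons, H.zero_mid, zero_add, sum_toList, hE' a]
  set l : List (S × Γ × S) :=
    (List.ofFn (fun i : Fin (e.n + 1) => P.map fun q => (A i, q.1, q.2))).flatten with hldef
  set r : List (S × Γ × S) :=
    (List.ofFn (fun i : Fin (e.n + 1) => P.map fun q => (C i, q.1, q.2))).flatten with hrdef
  have lsum : ∀ (B : Fin (e.n + 1) → S),
      (((List.ofFn (fun i : Fin (e.n + 1) => P.map fun q => (B i, q.1, q.2))).flatten.map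
        (tf H)).sum) = ∑ i, B i := by
    intro B
    simp only [List.map_flatten, List.map_ofFn, List.sum_flatten, Function.comp_def,
      List.map_map, Fin.sum_ofFn]
    exact Finset.sum_congr rfl fun i _ => unity (B i)
  have llen : ∀ (B : Fin (e.n + 1) → S),
      (List.ofFn (fun i : Fin (e.n + 1) => P.map fun q => (B i, q.1, q.2))).flatten.length
        = ∑ _i : Fin (e.n + 1), P.length := by
    intro B
    rw [List.length_flatten, List.map_ofFn, List.sum_ofFn]
    exact Finset.sum_congr rfl fun i _ => by simp
  refine hProdG_le_of_list H μ (fun _ => 1) (H.lAct u s) (H.lActQ e.z s) l r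
    ((llen A).trans (llen C).symm)
    (by rw [hldef, llen A]; have : 0 < P.length := by simp [hP]
        calc 0 < P.length := this
          _ ≤ _ := Finset.single_le_sum (f := fun _ : Fin (e.n+1) => P.length)
                (fun _ _ => Nat.zero_le _) (Finset.mem_univ 0))
    (by rw [hldef, hrdef, lsum A, lsum C]; exact key) _ ?_ ?_
  · intro p hp
    rw [hldef, List.mem_flatten] at hp
    obtain ⟨L', hL', hpL⟩ := hp
    rw [List.mem_ofFn] at hL'
    obtain ⟨i, rfl⟩ := hL'
    rw [List.mem_map] at hpL
    obtain ⟨q, _, rfl⟩ := hpL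
    refine le_inf ?_ (le_one _)
    calc (⨅ i, (ν (e.a i) ⊓ ν (e.c i)) ⊓ ((fun _ => (1:unitInterval)) (e.b i) ⊓ (fun _ => (1:unitInterval)) (e.d i)))
        ≤ ν (e.a i) := (iInf_le _ i).trans (inf_le_left.trans inf_le_left)
      _ ≤ μ (A i) := plusPrime_le H μ (e.a i) (H.lActQ (e.b i) s)
  · intro p hp
    rw [hrdef, List.mem_flatten] at hp
    obtain ⟨L', hL', hpL⟩ := hp
    rw [List.mem_ofFn] at hL'
    obtain ⟨i, rfl⟩ := hL'
    rw [List.mem_map] at hpL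
    obtain ⟨q, _, rfl⟩ := hpL
    refine le_inf ?_ (le_one _)
    calc (⨅ i, (ν (e.a i) ⊓ ν (e.c i)) ⊓ ((fun _ => (1:unitInterval)) (e.b i) ⊓ (fun _ => (1:unitInterval)) (e.d i)))
        ≤ ν (e.c i) := (iInf_le _ i).trans (inf_le_left.trans inf_le_right)
      _ ≤ μ (C i) := plusPrime_le H μ (e.c i) (H.lActQ (e.d i) s)

lemma claimB (μ : S → unitInterval) (hμ : H.IsGFuzzyHQuasiIdeal μ)
    (u : Multiset (S × Γ)) (s : S) :
    hProdH (fun _ => 1) (H.plusPrime μ) (Quotient.mk H.lSetoid u)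
      ≤ H.hProdG (fun _ => 1) μ (H.lAct u s) := by
  refine iSup_le fun e => ?_
  set ν := H.plusPrime μ
  set t : Fin (e.n + 1) → S := fun i => H.lActQ (e.b i) s with ht
  set t' : Fin (e.n + 1) → S := fun i => H.lActQ (e.d i) s with ht'
  set A : Fin (e.n + 1) → S := fun i => H.lActQ (e.a i) (t i) with hA
  set C : Fin (e.n + 1) → S := fun i => H.lActQ (e.c i) (t' i) with hC
  have key := heqS H u s e.a e.b e.c e.d e.z e.eq
  set l0 : List (S × Γ × S) :=
    (List.ofFn (fun i : Fin (e.n + 1) =>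
      (((0 : S), (0 : Γ)) :: (Quotient.out (e.a i)).toList).map
        fun q => (q.1, q.2, t i))).flatten with hl0
  set r0 : List (S × Γ × S) :=
    (List.ofFn (fun i : Fin (e.n + 1) =>
      (((0 : S), (0 : Γ)) :: (Quotient.out (e.c i)).toList).map
        fun q => (q.1, q.2, t' i))).flatten with hr0
  have lsum : ∀ (p : H.LOp) (w : S),
      (((((0 : S), (0 : Γ)) :: (Quotient.out p).toList).map
          fun q => ((q.1, q.2, w) : S × Γ × S)).map (tf H)).sum = H.lActQ p w := by
    intro p w
    rw [List.map_map, List.map_cons, List.sum_cons]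
    have h0 : (tf H ∘ fun q : S × Γ => ((q.1, q.2, w) : S × Γ × S)) ((0:S), (0:Γ))
        = H.tri 0 0 w := rfl
    rw [h0, H.zero_left, zero_add]
    have h1 : (tf H ∘ fun q : S × Γ => ((q.1, q.2, w) : S × Γ × S))
        = fun q : S × Γ => H.tri q.1 q.2 w := rfl
    rw [h1, sum_toList]
    exact lActQ_out H p w
  have l0sum : ((l0.map (tf H)).sum) = ∑ i, A i := by
    rw [hl0, List.map_flatten, List.map_ofFn, List.sum_flatten, List.map_ofFn, Fin.sum_ofFn]
    exact Finset.sum_congr rfl fun i _ => lsum (e.a i) (t i)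
  have r0sum : ((r0.map (tf H)).sum) = ∑ i, C i := by
    rw [hr0, List.map_flatten, List.map_ofFn, List.sum_flatten, List.map_ofFn, Fin.sum_ofFn]
    exact Finset.sum_congr rfl fun i _ => lsum (e.c i) (t' i)
  have l0pos : 0 < l0.length := by
    rw [hl0, List.length_flatten, List.map_ofFn, Fin.sum_ofFn]
    refine Finset.sum_pos (fun i _ => ?_) Finset.univ_nonempty
    simp
  set N : ℕ := max l0.length r0.length with hN
  set l : List (S × Γ × S) := l0 ++ List.replicate (N - l0.length) ((0:S), (0:Γ), (0:S))
    with hldef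
  set r : List (S × Γ × S) := r0 ++ List.replicate (N - r0.length) ((0:S), (0:Γ), (0:S))
    with hrdef
  have llen : l.length = N := by
    rw [hldef, List.length_append, List.length_replicate,
      Nat.add_sub_cancel' (le_max_left _ _)]
  have rlen : r.length = N := by
    rw [hrdef, List.length_append, List.length_replicate,
      Nat.add_sub_cancel' (le_max_right _ _)]
  have padsum : ∀ k : ℕ, ((List.replicate k ((0:S), (0:Γ), (0:S))).map (tf H)).sum = 0 := by
    intro k
    rw [List.map_replicate, List.sum_replicate]
    rw [show tf H ((0:S), (0:Γ), (0:S)) = H.tri 0 0 0 from rfl, H.zero_left, smul_zero]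
  have lsum' : (l.map (tf H)).sum = ∑ i, A i := by
    rw [hldef, List.map_append, List.sum_append, padsum, add_zero, l0sum]
  have rsum' : (r.map (tf H)).sum = ∑ i, C i := by
    rw [hrdef, List.map_append, List.sum_append, padsum, add_zero, r0sum]
  have hβ0 : (⨅ i, (((fun _ => (1:unitInterval)) (e.a i)) ⊓ ((fun _ => (1:unitInterval)) (e.c i)))
        ⊓ (ν (e.b i) ⊓ ν (e.d i))) ≤ μ 0 := by
    calc (⨅ i, (((fun _ => (1:unitInterval)) (e.a i)) ⊓ ((fun _ => (1:unitInterval)) (e.c i)))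
          ⊓ (ν (e.b i) ⊓ ν (e.d i)))
        ≤ ν (e.b 0) := (iInf_le _ 0).trans (inf_le_right.trans inf_le_left)
      _ ≤ μ (t 0) := plusPrime_le H μ (e.b 0) s
      _ ≤ μ 0 := mu_zero H μ hμ (t 0)
  refine hProdG_le_of_list H (fun _ => 1) μ (H.lAct u s) (H.lActQ e.z s) l r
    (llen.trans rlen.symm) (llen ▸ lt_of_lt_of_le l0pos (le_max_left _ _))
    (by rw [lsum', rsum']; exact key) _ ?_ ?_
  · intro p hp
    rw [hldef, List.mem_append] at hp
    rcases hp with hp | hp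
    · rw [hl0, List.mem_flatten] at hp
      obtain ⟨L', hL', hpL⟩ := hp
      rw [List.mem_ofFn] at hL'
      obtain ⟨i, rfl⟩ := hL'
      rw [List.mem_map] at hpL
      obtain ⟨q, _, rfl⟩ := hpL
      refine le_inf (le_one _) ?_
      calc _ ≤ ν (e.b i) := (iInf_le _ i).trans (inf_le_right.trans inf_le_left)
        _ ≤ μ (t i) := plusPrime_le H μ (e.b i) s
    · rw [List.eq_of_mem_replicate hp]
      exact le_inf (le_one _) hβ0
  · intro p hp
    rw [hrdef, List.mem_append] at hp
    rcases hp with hp | hp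
    · rw [hr0, List.mem_flatten] at hp
      obtain ⟨L', hL', hpL⟩ := hp
      rw [List.mem_ofFn] at hL'
      obtain ⟨i, rfl⟩ := hL'
      rw [List.mem_map] at hpL
      obtain ⟨q, _, rfl⟩ := hpL
      refine le_inf (le_one _) ?_
      calc _ ≤ ν (e.d i) := (iInf_le _ i).trans (inf_le_right.trans inf_le_right)
        _ ≤ μ (t' i) := plusPrime_le H μ (e.d i) s
    · rw [List.eq_of_mem_replicate hp]
      exact le_inf (le_one _) hβ0

end PlusPrimeAux

/-- if `μ` is a fuzzy h-quasi-ideal of `S` (with left and right unities),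
then `μ⁺′` is a fuzzy h-quasi-ideal of `L`. -/
theorem plusPrime_quasiIdeal {S Γ : Type} [AddCommMonoid S] [AddCommMonoid Γ]
    (H : GammaHemiring S Γ)
    (E : Multiset (S × Γ)) (hE : H.IsLeftUnity E)
    (E' : Multiset (Γ × S)) (hE' : H.IsRightUnity E')
    (μ : S → unitInterval) (hμ : H.IsGFuzzyHQuasiIdeal μ) :
    IsFuzzyHQuasiIdeal (H.plusPrime μ) := by
  classical
  open PlusPrimeAux in
  refine ⟨?_, ?_, ?_⟩
  · intro x y
    refine Quotient.inductionOn₂ x y fun u v => ?_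
    show H.plusPrime μ _ ⊓ H.plusPrime μ _ ≤ H.plusPrime μ (Quotient.mk H.lSetoid (u + v))
    refine le_iInf fun s => ?_
    calc H.plusPrime μ (Quotient.mk H.lSetoid u) ⊓ H.plusPrime μ (Quotient.mk H.lSetoid v)
        ≤ μ (H.lAct u s) ⊓ μ (H.lAct v s) :=
          inf_le_inf (iInf_le _ s) (iInf_le _ s)
      _ ≤ μ (H.lAct u s + H.lAct v s) := hμ.1 _ _
      _ = μ (H.lAct (u + v) s) := by rw [H.lAct_add]
  · intro x
    refine Quotient.inductionOn x fun u => ?_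
    show _ ≤ H.plusPrime μ (Quotient.mk H.lSetoid u)
    refine le_iInf fun s => ?_
    calc hProdH (H.plusPrime μ) (fun _ => 1) (Quotient.mk H.lSetoid u)
          ⊓ hProdH (fun _ => 1) (H.plusPrime μ) (Quotient.mk H.lSetoid u)
        ≤ H.hProdG μ (fun _ => 1) (H.lAct u s) ⊓ H.hProdG (fun _ => 1) μ (H.lAct u s) :=
          inf_le_inf (claimA H E' hE' μ u s) (claimB H μ hμ u s)
      _ ≤ μ (H.lAct u s) := hμ.2.1 _
  · intro x a b z
    refine Quotient.inductionOn₂ x a fun ux ua =>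
      Quotient.inductionOn₂ b z fun ub uz => ?_
    intro hxz
    show H.plusPrime μ (Quotient.mk H.lSetoid ua) ⊓ H.plusPrime μ (Quotient.mk H.lSetoid ub)
      ≤ H.plusPrime μ (Quotient.mk H.lSetoid ux)
    have hrel : ∀ s, H.lAct ux s + H.lAct ua s + H.lAct uz s
        = H.lAct ub s + H.lAct uz s := by
      intro s
      have := Quotient.exact hxz s
      simpa [GammaHemiring.lAct_add] using this
    refine le_iInf fun s => ?_
    calc H.plusPrime μ (Quotient.mk H.lSetoid ua) ⊓ H.plusPrime μ (Quotient.mk H.lSetoid ub)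
        ≤ μ (H.lAct ua s) ⊓ μ (H.lAct ub s) := inf_le_inf (iInf_le _ s) (iInf_le _ s)
      _ ≤ μ (H.lAct ux s) := hμ.2.2 _ _ _ _ (hrel s)
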